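/- arXiv:math/0102217 — 2 statements merged into one kernel-verified Lean document; each statement's English description precedes it below -/
import Mathlib

section
/- Let $\underline a_i$ ($1\le i\le m$) and $\underline a_n$ be monomial ideals in $\mathbb{C}[X_1,\dots,X_r]$ with $i\mid n$ and $\underline a_i^{n/i}\subseteq\underline a_n$ for all $i$, and similarly $\underline b_i,\underline b_n$ in $\mathbb{C}[Y_1,\dots,Y_s]$. Let $\phi:\mathbb{R}^r\to\mathbb{R}$ and $\psi:\mathbb{R}^s\to\mathbb{R}$ be linear maps with $\phi(w)\ge 1$ whenever $X^w\in\underline a_n$ and $\psi(w)\ge 1$ whenever $Y^w\in\underline b_n$. Then for every monomial $X^{w_1}Y^{w_2}$ in the ideal $p^{-1}\underline a_m+\sum_{i=1}^{m-1}p^{-1}\underline a_i\cdot q^{-1}\underline b_{m-i}+q^{-1}\underline b_m$ of $\mathbb{C}[X,Y]$, one has $\phi(w_1)+\psi(w_2)\ge m/n$, provided $\phi$ and $\psi$ are nonnegative on the nonnegative orthants. -/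
/-- `X^v` as an element of `ℂ[X_1,…,X_r]`. -/
noncomputable def monoX {r : ℕ} (v : Fin r → ℕ) : MvPolynomial (Fin r) ℂ :=
  MvPolynomial.monomial (Finsupp.equivFunOnFinite.symm v) 1

/-- `X^{v₁} Y^{v₂}` as an element of `ℂ[X_1,…,X_r,Y_1,…,Y_s]`. -/
noncomputable def monoXY {r s : ℕ} (v₁ : Fin r → ℕ) (v₂ : Fin s → ℕ) :
    MvPolynomial (Fin r ⊕ Fin s) ℂ :=
  MvPolynomial.monomial (Finsupp.equivFunOnFinite.symm (Sum.elim v₁ v₂)) 1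

/-- An ideal of `ℂ[X_1,…,X_r]` is a monomial ideal if it is generated by monomials. -/
def IsMonomialIdeal {r : ℕ} (I : Ideal (MvPolynomial (Fin r) ℂ)) : Prop :=
  ∃ S : Set (Fin r → ℕ), I = Ideal.span (monoX '' S)

lemma monoX_pow {r : ℕ} (v : Fin r → ℕ) (k : ℕ) :
    monoX v ^ k = monoX (fun j => k * v j) := by
  rw [monoX, monoX, MvPolynomial.monomial_pow, one_pow]
  have h : (k • Finsupp.equivFunOnFinite.symm v : Fin r →₀ ℕ)
      = Finsupp.equivFunOnFinite.symm (fun j => k * v j) := by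
    ext j; simp
  rw [h]

lemma pow_bound {r : ℕ} (n i : ℕ) (hi : 0 < i) (hin : i ∣ n) (hn : 0 < n)
    (a an : Ideal (MvPolynomial (Fin r) ℂ))
    (hpow : a ^ (n / i) ≤ an)
    (φ : (Fin r → ℝ) →ₗ[ℝ] ℝ)
    (hφ : ∀ w : Fin r → ℕ, monoX w ∈ an → 1 ≤ φ (fun k => (w k : ℝ)))
    (u : Fin r → ℕ) (hu : monoX u ∈ a) :
    (i : ℝ) / n ≤ φ (fun k => (u k : ℝ)) := by
  obtain ⟨k, hk⟩ := hin
  have hk0 : 0 < k := by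
    rcases Nat.eq_zero_or_pos k with h | h
    · subst h; omega
    · exact h
  have hni : n / i = k := by rw [hk, Nat.mul_div_cancel_left _ hi]
  have hmem : monoX (fun j => k * u j) ∈ an := by
    rw [← monoX_pow]
    exact hpow (hni ▸ Ideal.pow_mem_pow hu (n / i))
  have h1 := hφ _ hmem
  have heq : (fun j => ((k * u j : ℕ) : ℝ)) = (k : ℝ) • fun j => (u j : ℝ) := by
    funext j; simp [mul_comm]
  rw [heq, map_smul, smul_eq_mul] at h1
  have hk0' : (0 : ℝ) < k := by exact_mod_cast hk0
  rw [hk, Nat.cast_mul, div_mul_eq_div_div]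
  rw [div_le_iff₀ hk0'] at *
  have : (i:ℝ) / i = 1 := div_self (by positivity)
  calc (i:ℝ)/i = 1 := this
    _ ≤ φ (fun j => (u j : ℝ)) * k := by linarith [h1]

lemma renameL {r s : ℕ} (u : Fin r → ℕ) :
    (MvPolynomial.rename (Sum.inl : Fin r → Fin r ⊕ Fin s)) (monoX u) = monoXY u 0 := by
  have h : Finsupp.mapDomain (Sum.inl : Fin r → Fin r ⊕ Fin s) (Finsupp.equivFunOnFinite.symm u)
      = Finsupp.equivFunOnFinite.symm (Sum.elim u (0 : Fin s → ℕ)) := by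
    apply Finsupp.ext
    intro x
    cases x with
    | inl k => rw [Finsupp.mapDomain_apply Sum.inl_injective]; simp
    | inr k => rw [Finsupp.mapDomain_notin_range _ _ (by simp)]; simp
  rw [monoX, MvPolynomial.rename_monomial, h, monoXY]

lemma renameR {r s : ℕ} (v : Fin s → ℕ) :
    (MvPolynomial.rename (Sum.inr : Fin s → Fin r ⊕ Fin s)) (monoX v) = monoXY 0 v := by
  have h : Finsupp.mapDomain (Sum.inr : Fin s → Fin r ⊕ Fin s) (Finsupp.equivFunOnFinite.symm v)
      = Finsupp.equivFunOnFinite.symm (Sum.elim (0 : Fin r → ℕ) v) := by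
    apply Finsupp.ext
    intro x
    cases x with
    | inl k => rw [Finsupp.mapDomain_notin_range _ _ (by simp)]; simp
    | inr k => rw [Finsupp.mapDomain_apply Sum.inr_injective]; simp
  rw [monoX, MvPolynomial.rename_monomial, h, monoXY]

lemma mulXY {r s : ℕ} (u : Fin r → ℕ) (v : Fin s → ℕ) :
    monoXY u (0 : Fin s → ℕ) * monoXY (0 : Fin r → ℕ) v = monoXY u v := by
  have h : (Finsupp.equivFunOnFinite.symm (Sum.elim u (0 : Fin s → ℕ))
        + Finsupp.equivFunOnFinite.symm (Sum.elim (0 : Fin r → ℕ) v) : (Fin r ⊕ Fin s) →₀ ℕ)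
      = Finsupp.equivFunOnFinite.symm (Sum.elim u v) := by
    apply Finsupp.ext
    intro x
    cases x <;> simp
  rw [monoXY, monoXY, monoXY, MvPolynomial.monomial_mul, one_mul, h]

/-- The main computation of Lemma 1.3: if `aᵢ^{n/i} ⊆ aₙ`, `bᵢ^{n/i} ⊆ bₙ`, and the
linear maps `φ`, `ψ` are `≥ 1` on exponents of `aₙ`, `bₙ` (and nonnegative on the
orthants), then `φ(w₁) + ψ(w₂) ≥ m/n` for every monomial `X^{w₁} Y^{w₂}` in
`p⁻¹aₘ + ∑ᵢ p⁻¹aᵢ · q⁻¹b_{m-i} + q⁻¹bₘ`. -/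
theorem phi_add_psi_ge_m_div_n
    {r s : ℕ} (m n : ℕ) (hm : 0 < m) (hn : 0 < n)
    (a : ℕ → Ideal (MvPolynomial (Fin r) ℂ)) (b : ℕ → Ideal (MvPolynomial (Fin s) ℂ))
    (hamono : ∀ i, IsMonomialIdeal (a i)) (hbmono : ∀ i, IsMonomialIdeal (b i))
    (hdvd : ∀ i, 1 ≤ i → i ≤ m → i ∣ n)
    (hapow : ∀ i, 1 ≤ i → i ≤ m → a i ^ (n / i) ≤ a n)
    (hbpow : ∀ i, 1 ≤ i → i ≤ m → b i ^ (n / i) ≤ b n)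
    (φ : (Fin r → ℝ) →ₗ[ℝ] ℝ) (ψ : (Fin s → ℝ) →ₗ[ℝ] ℝ)
    (hφ : ∀ w : Fin r → ℕ, monoX w ∈ a n → 1 ≤ φ (fun k => (w k : ℝ)))
    (hψ : ∀ w : Fin s → ℕ, monoX w ∈ b n → 1 ≤ ψ (fun k => (w k : ℝ)))
    (hφpos : ∀ w : Fin r → ℝ, (∀ k, 0 ≤ w k) → 0 ≤ φ w)
    (hψpos : ∀ w : Fin s → ℝ, (∀ k, 0 ≤ w k) → 0 ≤ ψ w) :
    ∀ (w₁ : Fin r → ℕ) (w₂ : Fin s → ℕ),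
      monoXY w₁ w₂ ∈
        (a m).map (MvPolynomial.rename (Sum.inl : Fin r → Fin r ⊕ Fin s)).toRingHom ⊔
        (⨆ (i : ℕ) (_ : i ∈ Finset.Ioo 0 m),
          (a i).map (MvPolynomial.rename (Sum.inl : Fin r → Fin r ⊕ Fin s)).toRingHom *
          (b (m - i)).map (MvPolynomial.rename (Sum.inr : Fin s → Fin r ⊕ Fin s)).toRingHom) ⊔
        (b m).map (MvPolynomial.rename (Sum.inr : Fin s → Fin r ⊕ Fin s)).toRingHom →
      (m : ℝ) / n ≤ φ (fun k => (w₁ k : ℝ)) + ψ (fun k => (w₂ k : ℝ)) := by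
  intro w₁ w₂ hmem
  set F : ((Fin r ⊕ Fin s) →₀ ℕ) → ℝ := fun d =>
    φ (fun k => (d (Sum.inl k) : ℝ)) + ψ (fun k => (d (Sum.inr k) : ℝ)) with hF
  set T : Set ((Fin r ⊕ Fin s) →₀ ℕ) := {d | (m : ℝ) / n ≤ F d} with hT
  -- monotonicity of F
  have Fmono : ∀ t d : (Fin r ⊕ Fin s) →₀ ℕ, t ≤ d → F t ≤ F d := by
    intro t d hle
    have hle' := Finsupp.le_def.mp hle
    have h1 : (fun k => (d (Sum.inl k) : ℝ))
        = (fun k => (t (Sum.inl k) : ℝ)) + fun k => ((d (Sum.inl k) - t (Sum.inl k) : ℕ) : ℝ) := by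
      funext k
      simp only [Pi.add_apply]
      rw [Nat.cast_sub (hle' _)]
      ring
    have h2 : (fun k => (d (Sum.inr k) : ℝ))
        = (fun k => (t (Sum.inr k) : ℝ)) + fun k => ((d (Sum.inr k) - t (Sum.inr k) : ℕ) : ℝ) := by
      funext k
      simp only [Pi.add_apply]
      rw [Nat.cast_sub (hle' _)]
      ring
    have p1 : 0 ≤ φ fun k => ((d (Sum.inl k) - t (Sum.inl k) : ℕ) : ℝ) :=
      hφpos _ (fun k => by positivity)
    have p2 : 0 ≤ ψ fun k => ((d (Sum.inr k) - t (Sum.inr k) : ℕ) : ℝ) :=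
      hψpos _ (fun k => by positivity)
    simp only [hF, h1, h2, map_add]
    linarith
  -- generator bounds
  have aga : ∀ i, 0 < i → i ≤ m → ∀ u : Fin r → ℕ, monoX u ∈ a i →
      (i : ℝ) / n ≤ φ (fun k => (u k : ℝ)) := fun i hi him u hu =>
    pow_bound n i hi (hdvd i hi him) hn _ _ (hapow i hi him) φ hφ u hu
  have agb : ∀ i, 0 < i → i ≤ m → ∀ v : Fin s → ℕ, monoX v ∈ b i →
      (i : ℝ) / n ≤ ψ (fun k => (v k : ℝ)) := fun i hi him v hv =>
    pow_bound n i hi (hdvd i hi him) hn _ _ (hbpow i hi him) ψ hψ v hv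
  -- monoXY u v is in T (as an exponent) under the right bounds
  have memT : ∀ (i j : ℕ) (u : Fin r → ℕ) (v : Fin s → ℕ),
      i + j = m → (i : ℝ) / n ≤ φ (fun k => (u k : ℝ)) →
      (j : ℝ) / n ≤ ψ (fun k => (v k : ℝ)) →
      (Finsupp.equivFunOnFinite.symm (Sum.elim u v) : (Fin r ⊕ Fin s) →₀ ℕ) ∈ T := by
    intro i j u v hij h1 h2
    simp only [hT, Set.mem_setOf_eq, hF]
    have e1 : (fun k => ((Finsupp.equivFunOnFinite.symm (Sum.elim u v) : (Fin r ⊕ Fin s) →₀ ℕ)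
        (Sum.inl k) : ℝ)) = fun k => (u k : ℝ) := by
      funext k; simp [Finsupp.equivFunOnFinite]; rfl
    have e2 : (fun k => ((Finsupp.equivFunOnFinite.symm (Sum.elim u v) : (Fin r ⊕ Fin s) →₀ ℕ)
        (Sum.inr k) : ℝ)) = fun k => (v k : ℝ) := by
      funext k; simp [Finsupp.equivFunOnFinite]; rfl
    rw [e1, e2]
    have : (m : ℝ) / n = (i : ℝ) / n + (j : ℝ) / n := by
      rw [← hij]; push_cast; ring
    rw [this]
    exact add_le_add h1 h2
  have hzφ : ((0 : ℕ) : ℝ) / n ≤ φ (fun k => ((0 : Fin r → ℕ) k : ℝ)) := by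
    simp only [Nat.cast_zero, zero_div]
    exact hφpos _ (fun k => by positivity)
  have hzψ : ((0 : ℕ) : ℝ) / n ≤ ψ (fun k => ((0 : Fin s → ℕ) k : ℝ)) := by
    simp only [Nat.cast_zero, zero_div]
    exact hψpos _ (fun k => by positivity)
  -- the big ideal is contained in the span of monomials with exponents in T
  have key : ((a m).map (MvPolynomial.rename (Sum.inl : Fin r → Fin r ⊕ Fin s)).toRingHom ⊔
        (⨆ (i : ℕ) (_ : i ∈ Finset.Ioo 0 m),
          (a i).map (MvPolynomial.rename (Sum.inl : Fin r → Fin r ⊕ Fin s)).toRingHom *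
          (b (m - i)).map (MvPolynomial.rename (Sum.inr : Fin s → Fin r ⊕ Fin s)).toRingHom) ⊔
        (b m).map (MvPolynomial.rename (Sum.inr : Fin s → Fin r ⊕ Fin s)).toRingHom)
      ≤ Ideal.span ((fun d => MvPolynomial.monomial d (1 : ℂ)) '' T) := by
    refine sup_le (sup_le ?_ ?_) ?_
    · obtain ⟨S, hS⟩ := hamono m
      rw [hS, Ideal.map_span]
      refine Ideal.span_le.mpr ?_
      rintro _ ⟨_, ⟨u, huS, rfl⟩, rfl⟩
      have hx : (MvPolynomial.rename (Sum.inl : Fin r → Fin r ⊕ Fin s)).toRingHom (monoX u)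
          = (fun d => MvPolynomial.monomial d (1 : ℂ))
            (Finsupp.equivFunOnFinite.symm (Sum.elim u (0 : Fin s → ℕ))) := renameL u
      rw [hx]
      exact Ideal.subset_span (Set.mem_image_of_mem _
        (memT m 0 u 0 (by omega)
          (aga m hm le_rfl u (hS ▸ Ideal.subset_span ⟨u, huS, rfl⟩)) hzψ))
    · refine iSup_le fun i => iSup_le fun hi => ?_
      simp only [Finset.mem_Ioo] at hi
      obtain ⟨S₁, hS₁⟩ := hamono i
      obtain ⟨S₂, hS₂⟩ := hbmono (m - i)
      rw [hS₁, hS₂, Ideal.map_span, Ideal.map_span, Ideal.span_mul_span]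
      refine Ideal.span_le.mpr ?_
      intro x hx
      rw [Set.mem_mul] at hx
      obtain ⟨p, hp, q, hq, rfl⟩ := hx
      obtain ⟨_, ⟨u, huS, rfl⟩, rfl⟩ := hp
      obtain ⟨_, ⟨v, hvS, rfl⟩, rfl⟩ := hq
      have hx : (MvPolynomial.rename (Sum.inl : Fin r → Fin r ⊕ Fin s)).toRingHom (monoX u)
          * (MvPolynomial.rename (Sum.inr : Fin s → Fin r ⊕ Fin s)).toRingHom (monoX v)
          = (fun d => MvPolynomial.monomial d (1 : ℂ))
            (Finsupp.equivFunOnFinite.symm (Sum.elim u v)) := by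
        have h1 : (MvPolynomial.rename (Sum.inl : Fin r → Fin r ⊕ Fin s)).toRingHom (monoX u)
            = monoXY u 0 := renameL u
        have h2 : (MvPolynomial.rename (Sum.inr : Fin s → Fin r ⊕ Fin s)).toRingHom (monoX v)
            = monoXY 0 v := renameR v
        rw [h1, h2, mulXY]
        rfl
      rw [hx]
      exact Ideal.subset_span (Set.mem_image_of_mem _
        (memT i (m - i) u v (by omega)
          (aga i hi.1 (le_of_lt hi.2) u (hS₁ ▸ Ideal.subset_span ⟨u, huS, rfl⟩))
          (agb (m - i) (by omega) (by omega) v (hS₂ ▸ Ideal.subset_span ⟨v, hvS, rfl⟩))))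
    · obtain ⟨S, hS⟩ := hbmono m
      rw [hS, Ideal.map_span]
      refine Ideal.span_le.mpr ?_
      rintro _ ⟨_, ⟨v, hvS, rfl⟩, rfl⟩
      have hx : (MvPolynomial.rename (Sum.inr : Fin s → Fin r ⊕ Fin s)).toRingHom (monoX v)
          = (fun d => MvPolynomial.monomial d (1 : ℂ))
            (Finsupp.equivFunOnFinite.symm (Sum.elim (0 : Fin r → ℕ) v)) := renameR v
      rw [hx]
      exact Ideal.subset_span (Set.mem_image_of_mem _
        (memT 0 m 0 v (by omega) hzφ
          (agb m hm le_rfl v (hS ▸ Ideal.subset_span ⟨v, hvS, rfl⟩))))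
  -- conclude
  have hmem' := key hmem
  rw [monoXY] at hmem'
  rw [MvPolynomial.mem_ideal_span_monomial_image] at hmem'
  have hsupp : (Finsupp.equivFunOnFinite.symm (Sum.elim w₁ w₂) : (Fin r ⊕ Fin s) →₀ ℕ)
      ∈ (MvPolynomial.monomial (Finsupp.equivFunOnFinite.symm (Sum.elim w₁ w₂))
        (1 : ℂ)).support := by
    rw [MvPolynomial.support_monomial]
    simp
  obtain ⟨t, htT, hle⟩ := hmem' _ hsupp
  have hbound : (m : ℝ) / n ≤ F (Finsupp.equivFunOnFinite.symm (Sum.elim w₁ w₂)) :=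
    le_trans htT (Fmono _ _ hle)
  have e1 : (fun k => ((Finsupp.equivFunOnFinite.symm (Sum.elim w₁ w₂) : (Fin r ⊕ Fin s) →₀ ℕ)
      (Sum.inl k) : ℝ)) = fun k => (w₁ k : ℝ) := by
    funext k; simp [Finsupp.equivFunOnFinite]; rfl
  have e2 : (fun k => ((Finsupp.equivFunOnFinite.symm (Sum.elim w₁ w₂) : (Fin r ⊕ Fin s) →₀ ℕ)
      (Sum.inr k) : ℝ)) = fun k => (w₂ k : ℝ) := by
    funext k; simp [Finsupp.equivFunOnFinite]; rfl
  simpa only [hF, e1, e2] using hbound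
end

section
/- Let $\underline a\subseteq\mathbb{C}[X_1,\dots,X_r]$ be a nonzero proper monomial ideal with Newton polyhedron $P_{\underline a}$, and let $\underline m=(X_1,\dots,X_r)$. For $c>0$ define Howald's multiplier ideal $M_c(\underline b)=(X^w: w+e\in\mathrm{Int}(c\cdot P_{\underline b}))$ for a monomial ideal $\underline b$. Then for every rational $\gamma\ge 0$, $\epsilon>0$, and integer $p\ge 1$: $M_{\gamma+\epsilon}(\underline a+\underline m^p)\subseteq M_\gamma(\underline a)+\underline m^{\max(0,[p\epsilon]-r+1)}$. -/
open Pointwise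

/-- The Newton polyhedron of a monomial ideal. -/
noncomputable def newtonPoly {r : ℕ} (a : Ideal (MvPolynomial (Fin r) ℂ)) :
    Set (Fin r → ℝ) :=
  convexHull ℝ {w | ∃ v : Fin r → ℕ, monoX v ∈ a ∧ w = fun k => (v k : ℝ)}

/-- Howald's multiplier ideal `M_c(a) = (X^w : w + e ∈ Int(c·P_a))` for `c > 0`,
with the paper's convention `M_c = (1)` for `c ≤ 0`. -/
noncomputable def howaldIdeal {r : ℕ} (a : Ideal (MvPolynomial (Fin r) ℂ)) (c : ℚ) :
    Ideal (MvPolynomial (Fin r) ℂ) :=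
  if c ≤ 0 then ⊤ else
    Ideal.span {f | ∃ v : Fin r → ℕ,
      ((fun k => (v k : ℝ)) + 1) ∈ interior ((c : ℝ) • newtonPoly a) ∧ f = monoX v}

section Aux

variable {r : ℕ}

lemma symm_apply (v : Fin r → ℕ) (k : Fin r) :
    (Finsupp.equivFunOnFinite.symm v) k = v k := rfl

lemma symm_add (u v : Fin r → ℕ) :
    Finsupp.equivFunOnFinite.symm (u + v)
      = Finsupp.equivFunOnFinite.symm u + Finsupp.equivFunOnFinite.symm v := by
  ext k; simp [symm_apply]

lemma monoX_mul (u v : Fin r → ℕ) : monoX u * monoX v = monoX (u + v) := by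
  simp [monoX, MvPolynomial.monomial_mul, symm_add]

/-- In the span of a set of monomials, every exponent with nonzero coefficient
dominates some generator exponent. -/
lemma exists_le_of_coeff_ne_zero {T : Set (Fin r → ℕ)} {f : MvPolynomial (Fin r) ℂ}
    (hf : f ∈ Ideal.span (monoX '' T)) :
    ∀ d : Fin r →₀ ℕ, MvPolynomial.coeff d f ≠ 0 → ∃ t ∈ T, ∀ k, t k ≤ d k := by
  refine Submodule.span_induction ?_ ?_ ?_ ?_ hf
  · rintro f ⟨t, ht, rfl⟩ d hd
    refine ⟨t, ht, fun k => ?_⟩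
    rw [monoX, MvPolynomial.coeff_monomial] at hd
    have : Finsupp.equivFunOnFinite.symm t = d := by
      by_contra h; simp [h] at hd
    rw [← this]; simp [symm_apply]
  · intro d hd; simp at hd
  · intro g h _ _ ihg ihh d hd
    rw [MvPolynomial.coeff_add] at hd
    rcases (by by_contra hc; push_neg at hc; simp [hc.1, hc.2] at hd :
        MvPolynomial.coeff d g ≠ 0 ∨ MvPolynomial.coeff d h ≠ 0) with h1 | h1
    · exact ihg d h1
    · exact ihh d h1
  · intro q g _ ih d hd
    rw [smul_eq_mul, MvPolynomial.coeff_mul] at hd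
    obtain ⟨x, hx, hne⟩ := Finset.exists_ne_zero_of_sum_ne_zero hd
    have h2 : MvPolynomial.coeff x.2 g ≠ 0 := fun h => hne (by simp [h])
    obtain ⟨t, ht, hle⟩ := ih x.2 h2
    refine ⟨t, ht, fun k => ?_⟩
    have : x.1 + x.2 = d := Finset.HasAntidiagonal.mem_antidiagonal.1 hx
    calc t k ≤ x.2 k := hle k
      _ ≤ d k := by rw [← this]; simp

lemma monoX_mem_of_le {a : Ideal (MvPolynomial (Fin r) ℂ)} {s d : Fin r → ℕ}
    (hs : monoX s ∈ a) (h : ∀ k, s k ≤ d k) : monoX d ∈ a := by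
  have : monoX (d - s) * monoX s = monoX d := by
    rw [monoX_mul]; congr 1; funext k
    exact Nat.sub_add_cancel (h k)
  rw [← this]; exact Ideal.mul_mem_left _ _ hs

lemma X_eq_monoX (k : Fin r) :
    (MvPolynomial.X k : MvPolynomial (Fin r) ℂ) = monoX (Pi.single k 1) := by
  rw [monoX]
  have : Finsupp.equivFunOnFinite.symm (Pi.single k 1) = Finsupp.single k 1 := by
    ext j; by_cases h : j = k <;> simp [symm_apply, h, Pi.single_apply]
  rw [this]; rfl

lemma monoX_one : monoX (0 : Fin r → ℕ) = 1 := by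
  have : Finsupp.equivFunOnFinite.symm (0 : Fin r → ℕ) = 0 := by ext k; simp [symm_apply]
  rw [monoX, this, MvPolynomial.monomial_zero']; simp

/-- `m^p` is contained in the span of monomials of degree `≥ p`. -/
lemma pow_le_span (p : ℕ) :
    (Ideal.span (Set.range (MvPolynomial.X : Fin r → MvPolynomial (Fin r) ℂ))) ^ p ≤
      Ideal.span (monoX '' {v : Fin r → ℕ | p ≤ ∑ k, v k}) := by
  induction p with
  | zero =>
    rw [pow_zero, Ideal.one_eq_top, top_le_iff, Ideal.eq_top_iff_one]
    exact Ideal.subset_span ⟨0, by simp, monoX_one⟩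
  | succ p ih =>
    rw [pow_succ]
    have hX : Ideal.span (Set.range (MvPolynomial.X : Fin r → MvPolynomial (Fin r) ℂ)) ≤
        Ideal.span (monoX '' {v : Fin r → ℕ | 1 ≤ ∑ k, v k}) := by
      apply Ideal.span_mono
      rintro _ ⟨k, rfl⟩
      exact ⟨Pi.single k 1, by simp, (X_eq_monoX k).symm⟩
    calc _ ≤ Ideal.span (monoX '' {v : Fin r → ℕ | p ≤ ∑ k, v k}) *
          Ideal.span (monoX '' {v : Fin r → ℕ | 1 ≤ ∑ k, v k}) := Ideal.mul_mono ih hX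
      _ = Ideal.span ((monoX '' {v : Fin r → ℕ | p ≤ ∑ k, v k}) *
          (monoX '' {v : Fin r → ℕ | 1 ≤ ∑ k, v k})) := Ideal.span_mul_span' _ _
      _ ≤ Ideal.span (monoX '' {v : Fin r → ℕ | p + 1 ≤ ∑ k, v k}) := by
          apply Ideal.span_mono
          rintro _ ⟨_, ⟨u, hu, rfl⟩, _, ⟨w, hw, rfl⟩, rfl⟩
          refine ⟨u + w, ?_, (monoX_mul u w).symm⟩
          simp only [Set.mem_setOf_eq] at hu hw ⊢
          simp only [Pi.add_apply]; rw [Finset.sum_add_distrib]; omega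

/-- A monomial of degree `≥ N` lies in `m^N`. -/
lemma monoX_mem_pow {v : Fin r → ℕ} {N : ℕ} (h : N ≤ ∑ k, v k) :
    monoX v ∈ (Ideal.span (Set.range (MvPolynomial.X : Fin r → MvPolynomial (Fin r) ℂ))) ^ N := by
  have h1 : monoX v ∈ (Ideal.span (Set.range (MvPolynomial.X : Fin r → MvPolynomial (Fin r) ℂ)))
      ^ (∑ k, v k) := by
    have : monoX v = ∏ k, (MvPolynomial.X k : MvPolynomial (Fin r) ℂ) ^ v k := by
      rw [monoX, MvPolynomial.monomial_eq, map_one, one_mul]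
      rw [Finsupp.prod_fintype]
      · simp [symm_apply]
      · intro k; exact pow_zero _
    rw [this, ← Finset.prod_pow_eq_pow_sum]
    exact Ideal.prod_mem_prod fun k _ => Ideal.pow_mem_pow
      (Ideal.subset_span (Set.mem_range_self k)) _
  exact Ideal.pow_le_pow_right h h1

/-- coercion of a lattice point to `ℝ^r`. -/
def cf (v : Fin r → ℕ) : Fin r → ℝ := fun k => (v k : ℝ)

lemma newtonPoly_eq (a : Ideal (MvPolynomial (Fin r) ℂ)) :
    newtonPoly a = convexHull ℝ (cf '' {v | monoX v ∈ a}) := by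
  unfold newtonPoly
  congr 1
  ext w
  constructor
  · rintro ⟨v, hv, rfl⟩; exact ⟨v, hv, rfl⟩
  · rintro ⟨v, hv, rfl⟩; exact ⟨v, hv, rfl⟩

/-- If a set is closed under adding nonnegative vectors, a point strictly above a member
is interior. -/
lemma mem_interior_of_up {Q : Set (Fin r → ℝ)}
    (hQ : ∀ q ∈ Q, ∀ d : Fin r → ℝ, (∀ k, 0 ≤ d k) → q + d ∈ Q)
    {q z : Fin r → ℝ} (hq : q ∈ Q) (h : ∀ k, q k < z k) : z ∈ interior Q := by
  have hU : IsOpen {u : Fin r → ℝ | ∀ k, q k < u k} := by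
    have he : {u : Fin r → ℝ | ∀ k, q k < u k} = ⋂ k, {u | q k < u k} := by
      ext u; simp [Set.mem_iInter]
    rw [he]
    exact isOpen_iInter_of_finite fun k =>
      isOpen_lt continuous_const (continuous_apply k)
  refine mem_interior.2 ⟨{u : Fin r → ℝ | ∀ k, q k < u k}, fun u hu => ?_, hU, h⟩
  have := hQ q hq (u - q) (fun k => by have := hu k; simp only [Pi.sub_apply]; linarith)
  simpa using this

lemma segment_single {s : Fin r → ℝ} {k : Fin r} {t : ℝ} (ht : 0 ≤ t) {n : ℕ} (hn : t ≤ n + 1) :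
    s + Pi.single k t ∈ segment ℝ s (s + Pi.single k ((n : ℝ) + 1)) := by
  have hN : (0:ℝ) < (n:ℝ) + 1 := by positivity
  refine ⟨1 - t / ((n:ℝ)+1), t / ((n:ℝ)+1), by
      have : t / ((n:ℝ)+1) ≤ 1 := by rw [div_le_one hN]; linarith
      linarith, by positivity, by ring, ?_⟩
  have : (t / ((n:ℝ)+1)) • (Pi.single k ((n:ℝ)+1) : Fin r → ℝ) = Pi.single k t := by
    funext j; by_cases h : j = k
    · subst h; simp [Pi.single_apply]; field_simp
    · simp [Pi.single_apply, h]
  rw [smul_add, this]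
  module

/-- convex hulls of images of "up-closed" lattice sets are closed under adding
nonnegative real vectors. -/
lemma hull_up {S : Set (Fin r → ℕ)} (hS : ∀ v ∈ S, ∀ m : Fin r → ℕ, v + m ∈ S)
    {x : Fin r → ℝ} (hx : x ∈ convexHull ℝ (cf '' S)) (d : Fin r → ℝ) (hd : ∀ k, 0 ≤ d k) :
    x + d ∈ convexHull ℝ (cf '' S) := by
  have step : ∀ (k : Fin r) (t : ℝ), 0 ≤ t → ∀ x ∈ convexHull ℝ (cf '' S),
      x + Pi.single k t ∈ convexHull ℝ (cf '' S) := by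
    intro k t ht x hx
    have key : ∀ s ∈ cf '' S, s + Pi.single k t ∈ convexHull ℝ (cf '' S) := by
      rintro _ ⟨v, hv, rfl⟩
      obtain ⟨n, hn⟩ := exists_nat_ge t
      have hmem : cf (v + Pi.single k (n + 1)) ∈ cf '' S :=
        Set.mem_image_of_mem _ (hS v hv _)
      have hcf : cf (v + Pi.single k (n + 1)) = cf v + Pi.single k ((n : ℝ) + 1) := by
        funext j; by_cases h : j = k
        · subst h; simp [cf, Pi.single_apply]
        · simp [cf, Pi.single_apply, h]
      have hseg := segment_single (s := cf v) (k := k) ht (n := n) (by linarith)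
      exact (convex_convexHull ℝ (cf '' S)).segment_subset
        (subset_convexHull ℝ _ ⟨v, hv, rfl⟩)
        (subset_convexHull ℝ _ (by rw [← hcf]; exact hmem)) hseg
    have h1 : (Pi.single k t : Fin r → ℝ) +ᵥ (cf '' S) ⊆ convexHull ℝ (cf '' S) := by
      rintro _ ⟨s, hs, rfl⟩
      have := key s hs
      simpa [vadd_eq_add, add_comm] using this
    have h2 : (Pi.single k t : Fin r → ℝ) +ᵥ convexHull ℝ (cf '' S) ⊆ convexHull ℝ (cf '' S) := by
      rw [← convexHull_vadd]
      exact convexHull_min h1 (convex_convexHull ℝ _)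
    exact h2 ⟨x, hx, by simp [vadd_eq_add, add_comm]⟩
  have main : ∀ F : Finset (Fin r), x + (∑ k ∈ F, Pi.single k (d k)) ∈ convexHull ℝ (cf '' S) := by
    intro F
    induction F using Finset.induction_on with
    | empty => simpa using hx
    | insert j F hj ih =>
      rw [Finset.sum_insert hj]
      have h3 := step j (d j) (hd j) _ ih
      have heq : x + (Pi.single j (d j) + ∑ k ∈ F, Pi.single k (d k)) =
          x + (∑ k ∈ F, Pi.single k (d k)) + Pi.single j (d j) := by abel
      rw [heq]; exact h3
  have hdsum : d = ∑ k, Pi.single k (d k) := by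
    funext j; rw [Finset.sum_apply]; simp [Pi.single_apply]
  rw [hdsum]; exact main Finset.univ

lemma hull_coord_nonneg {S : Set (Fin r → ℕ)} {x : Fin r → ℝ}
    (hx : x ∈ convexHull ℝ (cf '' S)) (k : Fin r) : 0 ≤ x k := by
  have hcv : Convex ℝ {u : Fin r → ℝ | 0 ≤ u k} :=
    convex_halfSpace_ge (LinearMap.proj k : (Fin r → ℝ) →ₗ[ℝ] ℝ).isLinear 0
  refine convexHull_min ?_ hcv hx
  rintro u ⟨v, _, hv⟩
  simp only [Set.mem_setOf_eq, ← hv, cf]; positivity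

lemma hull_sum_ge {S : Set (Fin r → ℕ)} {c : ℝ} (hS : ∀ v ∈ S, c ≤ ∑ k, (v k : ℝ))
    {x : Fin r → ℝ} (hx : x ∈ convexHull ℝ (cf '' S)) : c ≤ ∑ k, x k := by
  have hlin : IsLinearMap ℝ (fun u : Fin r → ℝ => ∑ k, u k) :=
    ⟨fun u v => by simp [Finset.sum_add_distrib], fun a u => by simp [Finset.mul_sum]⟩
  have hcv : Convex ℝ {u : Fin r → ℝ | c ≤ ∑ k, u k} := convex_halfSpace_ge hlin c
  refine convexHull_min ?_ hcv hx
  rintro u ⟨v, hv, huv⟩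
  simp only [Set.mem_setOf_eq, ← huv, cf]
  exact hS v hv

lemma exists_delta {Q : Set (Fin r → ℝ)} {x : Fin r → ℝ} (hx : x ∈ interior Q) :
    ∃ δ : ℝ, 0 < δ ∧ x - δ • (1 : Fin r → ℝ) ∈ Q := by
  obtain ⟨ε, hε, hball⟩ := Metric.isOpen_iff.1 isOpen_interior x hx
  refine ⟨ε / 2, by positivity, interior_subset (hball ?_)⟩
  rw [Metric.mem_ball]
  have : dist (x - (ε / 2) • (1 : Fin r → ℝ)) x ≤ ε / 2 := by
    rw [dist_pi_le_iff (by positivity)]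
    intro k
    simp [Real.dist_eq, abs_of_nonneg, le_of_lt hε]
  linarith

end Aux

/-- Proposition 2.1 for monomial ideals:
`M_{γ+ε}(a + m^p) ⊆ M_γ(a) + m^{max(0, [pε] - r + 1)}`. -/
theorem howaldIdeal_sum_maximal_pow_le
    {r : ℕ} (a : Ideal (MvPolynomial (Fin r) ℂ))
    (hamono : ∃ S : Set (Fin r → ℕ), a = Ideal.span (monoX '' S))
    (hbot : a ≠ ⊥) (htop : a ≠ ⊤)
    (γ ε : ℚ) (hγ : 0 ≤ γ) (hε : 0 < ε) (p : ℕ) (hp : 1 ≤ p) :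
    howaldIdeal
        (a ⊔ (Ideal.span (Set.range (MvPolynomial.X : Fin r → MvPolynomial (Fin r) ℂ))) ^ p)
        (γ + ε) ≤
      howaldIdeal a γ ⊔
        (Ideal.span (Set.range (MvPolynomial.X : Fin r → MvPolynomial (Fin r) ℂ))) ^
          (⌊(p : ℚ) * ε⌋ - r + 1).toNat := by
  obtain ⟨S, hS⟩ := hamono
  have hSsub : ∀ v ∈ S, monoX v ∈ a := fun v hv => hS ▸ Ideal.subset_span ⟨v, hv, rfl⟩
  have hSne : S.Nonempty := by
    rcases S.eq_empty_or_nonempty with h | h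
    · exact absurd (by rw [hS, h]; simp) hbot
    · exact h
  obtain ⟨v₀, hv₀S⟩ := hSne
  have hv₀ : monoX v₀ ∈ a := hSsub v₀ hv₀S
  rcases Nat.eq_zero_or_pos r with hr0 | hr
  · exfalso; apply htop
    subst hr0
    have hv00 : v₀ = 0 := funext fun k => k.elim0
    rw [Ideal.eq_top_iff_one, ← monoX_one, ← hv00]
    exact hv₀
  rcases eq_or_lt_of_le hγ with hγ0 | hγpos
  · have h8 : howaldIdeal a γ = ⊤ := by rw [howaldIdeal, if_pos (le_of_eq hγ0.symm)]
    rw [h8, top_sup_eq]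
    exact le_top
  have hγR : (0:ℝ) < (γ:ℝ) := by exact_mod_cast hγpos
  have hεR : (0:ℝ) < (ε:ℝ) := by exact_mod_cast hε
  rw [howaldIdeal, if_neg (not_le.2 (by linarith : (0:ℚ) < γ + ε)), Ideal.span_le]
  rintro f ⟨v, hint, rfl⟩
  rw [SetLike.mem_coe]
  obtain ⟨δ, hδ, hxδ⟩ := exists_delta hint
  set c : ℝ := ((γ + ε : ℚ) : ℝ) with hc
  have hcR : c = (γ:ℝ) + (ε:ℝ) := by rw [hc]; push_cast; ring
  have hc0 : 0 < c := by rw [hcR]; linarith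
  set Sa : Set (Fin r → ℕ) := {v | monoX v ∈ a} with hSa
  set Sp : Set (Fin r → ℕ) := {v | p ≤ ∑ k, v k} with hSp
  have hSaup : ∀ w ∈ Sa, ∀ m : Fin r → ℕ, w + m ∈ Sa := by
    intro w hw m
    simp only [hSa, Set.mem_setOf_eq] at hw ⊢
    rw [add_comm, ← monoX_mul]
    exact Ideal.mul_mem_left _ _ hw
  have hsub : newtonPoly
      (a ⊔ (Ideal.span (Set.range (MvPolynomial.X : Fin r → MvPolynomial (Fin r) ℂ))) ^ p)
      ⊆ convexHull ℝ (cf '' Sa ∪ cf '' Sp) := by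
    rw [newtonPoly_eq, ← Set.image_union]
    apply convexHull_mono
    apply Set.image_mono
    intro u hu
    obtain ⟨g, hg, h, hh, hgh⟩ := Submodule.mem_sup.1 hu
    have hco : MvPolynomial.coeff (Finsupp.equivFunOnFinite.symm u) (g + h) = 1 := by
      rw [hgh]; simp [monoX, MvPolynomial.coeff_monomial]
    rw [MvPolynomial.coeff_add] at hco
    by_cases hcg : MvPolynomial.coeff (Finsupp.equivFunOnFinite.symm u) g = 0
    · have hch : MvPolynomial.coeff (Finsupp.equivFunOnFinite.symm u) h ≠ 0 := by
        rw [hcg, zero_add] at hco; rw [hco]; norm_num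
      obtain ⟨t, ht, hle⟩ := exists_le_of_coeff_ne_zero (pow_le_span p hh) _ hch
      right
      simp only [hSp, Set.mem_setOf_eq] at ht ⊢
      calc p ≤ ∑ k, t k := ht
        _ ≤ ∑ k, u k := Finset.sum_le_sum fun k _ => by simpa [symm_apply] using hle k
    · obtain ⟨t, ht, hle⟩ := exists_le_of_coeff_ne_zero (hS ▸ hg) _ hcg
      left
      exact monoX_mem_of_le (hSsub t ht) fun k => by simpa [symm_apply] using hle k
  have hx2 : (fun k => ((v k : ℝ))) + 1 - δ • (1 : Fin r → ℝ)
      ∈ c • convexHull ℝ (cf '' Sa ∪ cf '' Sp) := Set.smul_set_mono hsub hxδ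
  obtain ⟨u, hu, hcu⟩ := Set.mem_smul_set.1 hx2
  have hSane : (cf '' Sa).Nonempty := ⟨cf v₀, v₀, hv₀, rfl⟩
  have hSpne : (cf '' Sp).Nonempty := by
    refine ⟨cf (fun _ => p), fun _ => p, ?_, rfl⟩
    simp only [hSp, Set.mem_setOf_eq, Finset.sum_const, Finset.card_univ, Fintype.card_fin,
      smul_eq_mul]
    exact Nat.le_mul_of_pos_left p hr
  rw [convexHull_union hSane hSpne, mem_convexJoin] at hu
  obtain ⟨y, hy, z, hz, ty, tz, hty, htz, htyz, hyz⟩ := hu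
  set x : Fin r → ℝ := (fun k => ((v k : ℝ))) + 1 - δ • (1 : Fin r → ℝ) with hxdef
  set α : ℝ := c * ty with hα
  set β : ℝ := c * tz with hβ
  have hxeq : x = α • y + β • z := by
    rw [← hcu, ← hyz, smul_add, smul_smul, smul_smul]
  have hα0 : 0 ≤ α := mul_nonneg hc0.le hty
  have hβ0 : 0 ≤ β := mul_nonneg hc0.le htz
  have hαβ : α + β = c := by rw [hα, hβ, ← mul_add, htyz, mul_one]
  have hy0 : ∀ k, 0 ≤ y k := hull_coord_nonneg hy
  have hz0 : ∀ k, 0 ≤ z k := hull_coord_nonneg hz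
  have hzsum : (p:ℝ) ≤ ∑ k, z k := by
    refine hull_sum_ge (fun w hw => ?_) hz
    simp only [hSp, Set.mem_setOf_eq] at hw
    have h6 : ((p:ℕ):ℝ) ≤ ((∑ k, w k : ℕ):ℝ) := by exact_mod_cast hw
    calc (p:ℝ) ≤ ((∑ k, w k : ℕ):ℝ) := h6
      _ = ∑ k, ((w k):ℝ) := by push_cast; rfl
  have hxk : ∀ k, x k = (v k : ℝ) + 1 - δ := by
    intro k
    rw [hxdef]
    simp
  rcases le_or_gt (γ:ℝ) α with hcase | hcase
  · -- Case 1: contribution from `a` is at least `γ`.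
    apply Ideal.mem_sup_left
    rw [howaldIdeal, if_neg (not_le.2 hγpos)]
    apply Ideal.subset_span
    refine ⟨v, ?_, rfl⟩
    have hQup : ∀ q ∈ ((γ:ℚ):ℝ) • newtonPoly a, ∀ d : Fin r → ℝ, (∀ k, 0 ≤ d k) →
        q + d ∈ ((γ:ℚ):ℝ) • newtonPoly a := by
      intro q hq d hd
      obtain ⟨u', hu', rfl⟩ := Set.mem_smul_set.1 hq
      refine Set.mem_smul_set.2 ⟨u' + (γ:ℝ)⁻¹ • d, ?_, ?_⟩
      · rw [newtonPoly_eq] at hu' ⊢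
        exact hull_up hSaup hu' _ fun k => by
          simp only [Pi.smul_apply, smul_eq_mul]
          exact mul_nonneg (by positivity) (hd k)
      · rw [smul_add, smul_smul, mul_inv_cancel₀ (ne_of_gt hγR), one_smul]
    have hqmem : ((γ:ℚ):ℝ) • y ∈ ((γ:ℚ):ℝ) • newtonPoly a :=
      Set.smul_mem_smul_set (by rw [newtonPoly_eq]; exact hy)
    refine mem_interior_of_up hQup hqmem fun k => ?_
    have h1 : x k = α * y k + β * z k := by rw [hxeq]; simp
    have h2 : (γ:ℝ) * y k ≤ α * y k := mul_le_mul_of_nonneg_right hcase (hy0 k)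
    have h3 : 0 ≤ β * z k := mul_nonneg hβ0 (hz0 k)
    have h4 := hxk k
    simp only [Pi.smul_apply, smul_eq_mul, Pi.add_apply, Pi.one_apply]
    linarith
  · -- Case 2: contribution from `m^p` exceeds `ε`.
    apply Ideal.mem_sup_right
    have hβε : (ε:ℝ) < β := by
      have : β = c - α := by linarith
      rw [this, hcR]; linarith
    have hsx : ∑ k, x k = (∑ k, (v k:ℝ)) + r - r * δ := by
      rw [Finset.sum_congr rfl fun k _ => hxk k, Finset.sum_sub_distrib,
        Finset.sum_add_distrib]
      simp [Finset.sum_const, Fintype.card_fin, mul_comm]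
    have hsx2 : ∑ k, x k = α * (∑ k, y k) + β * (∑ k, z k) := by
      have h7 : ∀ k : Fin r, x k = α * y k + β * z k := fun k => by rw [hxeq]; simp
      rw [Finset.sum_congr rfl fun k _ => h7 k, Finset.sum_add_distrib,
        Finset.mul_sum, Finset.mul_sum]
    have hysum : 0 ≤ ∑ k, y k := Finset.sum_nonneg fun k _ => hy0 k
    have hrδ : 0 ≤ (r:ℝ) * δ := by positivity
    have key : (ε:ℝ) * p - r < ∑ k, (v k:ℝ) := by
      have h1 : (ε:ℝ) * p < β * p := by
        apply mul_lt_mul_of_pos_right hβε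
        exact_mod_cast Nat.lt_of_lt_of_le Nat.zero_lt_one hp
      have h2 : β * (p:ℝ) ≤ β * ∑ k, z k := mul_le_mul_of_nonneg_left hzsum hβ0
      have h3 : 0 ≤ α * ∑ k, y k := mul_nonneg hα0 hysum
      linarith
    have hns : ∑ k, ((v k):ℝ) = ((∑ k, v k : ℕ):ℝ) := by push_cast; rfl
    have key2 : ((p:ℝ)) * (ε:ℝ) - (r:ℝ) < ((∑ k, v k : ℕ):ℝ) := by
      rw [← hns]; linarith
    have keyQ : (p:ℚ) * ε - (r:ℚ) < ((∑ k, v k : ℕ):ℚ) := by exact_mod_cast key2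
    have hfloor : ⌊(p:ℚ) * ε⌋ - (r:ℤ) < ((∑ k, v k : ℕ) : ℤ) := by
      have h5 : ⌊(p:ℚ) * ε - ((r:ℤ):ℚ)⌋ < ((∑ k, v k : ℕ) : ℤ) :=
        Int.floor_lt.2 (by exact_mod_cast keyQ)
      rwa [Int.floor_sub_intCast] at h5
    have hN : (⌊(p:ℚ) * ε⌋ - r + 1).toNat ≤ ∑ k, v k := by
      rw [Int.toNat_le]
      omega
    exact monoX_mem_pow hN
end
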